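/- Let α be a root of X³ − 3X − 1. Then for all rational numbers P and R, the norm from ℚ(α) to ℚ of P² + (−5 + α + α²)·R² equals P⁶ − 9P⁴R² + 18P²R⁴ + 9R⁶. -/

import Mathlib

open IntermediateField Polynomial

theorem stmt_11 (α : ℝ) (hα : α ^ 3 - 3 * α - 1 = 0) (P R : ℚ) :
    Algebra.norm ℚ
        ((P : ℚ⟮α⟯) ^ 2 +
          (-5 + AdjoinSimple.gen ℚ α + (AdjoinSimple.gen ℚ α) ^ 2) * (R : ℚ⟮α⟯) ^ 2) =
      P ^ 6 - 9 * P ^ 4 * R ^ 2 + 18 * P ^ 2 * R ^ 4 + 9 * R ^ 6 := by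
  -- the minimal polynomial
  set q : ℚ[X] := X ^ 3 - 3 * X - 1 with hq
  have hqmonic : q.Monic := by
    unfold q
    monicity!
  have hqdeg : q.natDegree = 3 := by
    unfold q
    compute_degree!
  have haev : (Polynomial.aeval α) q = 0 := by
    rw [hq]
    simp only [map_sub, map_mul, map_pow, aeval_X, map_one, map_ofNat]
    linarith [hα]
  have hint : IsIntegral ℚ α := ⟨q, hqmonic, haev⟩
  -- irreducibility of q
  have hmapz : (X ^ 3 - 3 * X - 1 : ℤ[X]).map (Int.castRingHom ℚ) = q := by
    simp [hq]
  have hirr : Irreducible q := by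
    rw [Polynomial.irreducible_iff_roots_eq_zero_of_degree_le_three (by omega) (by omega)]
    rw [Multiset.eq_zero_iff_forall_notMem]
    intro r hr
    rw [Polynomial.mem_roots hqmonic.ne_zero, Polynomial.IsRoot] at hr
    have hz : Polynomial.aeval r (X ^ 3 - 3 * X - 1 : ℤ[X]) = 0 := by
      rw [Polynomial.aeval_def, ← Polynomial.eval_map,
        show (algebraMap ℤ ℚ) = Int.castRingHom ℚ from rfl, hmapz]
      exact hr
    have hmz : (X ^ 3 - 3 * X - 1 : ℤ[X]).Monic := by monicity!
    obtain ⟨m, hm, hdvd⟩ := exists_integer_of_is_root_of_monic hmz hz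
    have hc0 : (X ^ 3 - 3 * X - 1 : ℤ[X]).coeff 0 = -1 := by
      simp [Polynomial.coeff_sub, Polynomial.coeff_one]
    rw [hc0] at hdvd
    have : m = 1 ∨ m = -1 := by
      rcases Int.isUnit_iff.mp (isUnit_of_dvd_unit hdvd (by norm_num)) with h | h
      exacts [Or.inl h, Or.inr h]
    have hrq : r = (m : ℚ) := by simpa using hm
    rcases this with h | h <;> rw [hrq, h] at hr <;> norm_num [hq] at hr
  have hmin : minpoly ℚ α = q := (minpoly.eq_of_irreducible_of_monic hirr haev hqmonic).symm
  -- the power basis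
  set θ : ℚ⟮α⟯ := AdjoinSimple.gen ℚ α with hθdef
  have hθ : θ ^ 3 - 3 * θ - 1 = 0 := by
    have : ((θ ^ 3 - 3 * θ - 1 : ℚ⟮α⟯) : ℝ) = 0 := by
      push_cast [hθdef, AdjoinSimple.coe_gen]
      rw [show (((3 : ℚ⟮α⟯)) : ℝ) = 3 by norm_cast]
      linarith [hα]
    exact_mod_cast this
  set pb := adjoin.powerBasis hint with hpb
  have hdim : pb.dim = 3 := by rw [hpb, adjoin.powerBasis_dim, hmin, hqdeg]
  set B := pb.basis.reindex (finCongr hdim) with hB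
  have hBj : ∀ j : Fin 3, B j = θ ^ (j : ℕ) := by
    intro j
    rw [hB, Module.Basis.reindex_apply, PowerBasis.basis_eq_pow]
    congr 1
  have hsmul : ∀ (c : ℚ) (y : ℚ⟮α⟯), c • y = (c : ℚ⟮α⟯) * y := by
    intro c y
    rw [Algebra.smul_def, eq_ratCast]
  set x : ℚ⟮α⟯ := (P : ℚ⟮α⟯) ^ 2 + (-5 + θ + θ ^ 2) * (R : ℚ⟮α⟯) ^ 2 with hx
  -- multiplication relations
  have h0 : x * B 0 = (P ^ 2 - 5 * R ^ 2) • B 0 + (R ^ 2 : ℚ) • B 1 + (R ^ 2 : ℚ) • B 2 := by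
    simp only [hBj, hsmul, Fin.val_zero, Fin.val_one, Fin.val_two, pow_zero, pow_one]
    push_cast
    ring
  have h1 : x * B 1 = (R ^ 2 : ℚ) • B 0 + (P ^ 2 - 2 * R ^ 2) • B 1 + (R ^ 2 : ℚ) • B 2 := by
    simp only [hBj, hsmul, Fin.val_zero, Fin.val_one, Fin.val_two, pow_zero, pow_one]
    push_cast
    linear_combination (R : ℚ⟮α⟯) ^ 2 * hθ
  have h2 : x * B 2 = (R ^ 2 : ℚ) • B 0 + (4 * R ^ 2 : ℚ) • B 1 + (P ^ 2 - 2 * R ^ 2) • B 2 := by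
    simp only [hBj, hsmul, Fin.val_zero, Fin.val_one, Fin.val_two, pow_zero, pow_one]
    push_cast
    linear_combination ((R : ℚ⟮α⟯) ^ 2 * (θ + 1)) * hθ
  have hnorm : Algebra.norm ℚ x = (Algebra.leftMulMatrix B x).det :=
    Algebra.norm_eq_matrix_det B x
  have hentry : ∀ i j, Algebra.leftMulMatrix B x i j = B.repr (x * B j) i :=
    fun i j => Algebra.leftMulMatrix_eq_repr_mul B x i j
  rw [hnorm, Matrix.det_fin_three]
  simp only [hentry, h0, h1, h2, map_add, map_smul, Module.Basis.repr_self, Finsupp.smul_single,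
    smul_eq_mul, mul_one, Finsupp.add_apply, Finsupp.single_apply]
  norm_num [Fin.ext_iff]
  ring
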